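/- (Bishop's theorem in Lorentz space) Every time-like curve γ : I → 𝕃⁴ parametrized by proper time admits a generalized Bishop frame of type B: there exist smooth maps Z₁,Z₂,Z₃ : I → ℝ⁴ and smooth functions b₁,b₂,b₃ : I → ℝ such that (T,Z₁,Z₂,Z₃) is an orthonormal frame along γ, T' = b₁Z₁ + b₂Z₂ + b₃Z₃, and Zᵢ' = bᵢT for i = 1,2,3. -/

import Mathlib

open Set Real

noncomputable section

/-- The Minkowski form on `ℝ⁴ = 𝕃⁴`: `⟨x,y⟩ = -x₀y₀ + x₁y₁ + x₂y₂ + x₃y₃`. -/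
def mink (x y : Fin 4 → ℝ) : ℝ :=
  -(x 0 * y 0) + x 1 * y 1 + x 2 * y 2 + x 3 * y 3

/-- `(T, Z₁, Z₂, Z₃)` is an orthonormal frame along a time-like curve with tangent `T`:
the `Zᵢ` are smooth on `I`, pairwise orthonormal (space-like) and orthogonal to `T`. -/
def OrthFrame (I : Set ℝ) (T Z₁ Z₂ Z₃ : ℝ → Fin 4 → ℝ) : Prop :=
  ContDiffOn ℝ (⊤ : ℕ∞) Z₁ I ∧ ContDiffOn ℝ (⊤ : ℕ∞) Z₂ I ∧ ContDiffOn ℝ (⊤ : ℕ∞) Z₃ I ∧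
  ∀ s ∈ I,
    mink (Z₁ s) (Z₁ s) = 1 ∧ mink (Z₂ s) (Z₂ s) = 1 ∧ mink (Z₃ s) (Z₃ s) = 1 ∧
    mink (Z₁ s) (Z₂ s) = 0 ∧ mink (Z₁ s) (Z₃ s) = 0 ∧ mink (Z₂ s) (Z₃ s) = 0 ∧
    mink (T s) (Z₁ s) = 0 ∧ mink (T s) (Z₂ s) = 0 ∧ mink (T s) (Z₃ s) = 0

/-- `γ` is a smooth time-like curve parametrized by proper time on `I`. -/
def ProperTime (I : Set ℝ) (γ : ℝ → Fin 4 → ℝ) : Prop :=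
  ContDiffOn ℝ (⊤ : ℕ∞) γ I ∧ ∀ s ∈ I, mink (deriv γ s) (deriv γ s) = -1

/-- Three smooth real functions on `I`. -/
def Smooth3 (I : Set ℝ) (x₁ x₂ x₃ : ℝ → ℝ) : Prop :=
  ContDiffOn ℝ (⊤ : ℕ∞) x₁ I ∧ ContDiffOn ℝ (⊤ : ℕ∞) x₂ I ∧ ContDiffOn ℝ (⊤ : ℕ∞) x₃ I

/-- `γ` admits a generalized Bishop frame of type B. -/
def AdmitsB (I : Set ℝ) (γ : ℝ → Fin 4 → ℝ) : Prop :=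
  ∃ (Z₁ Z₂ Z₃ : ℝ → Fin 4 → ℝ) (x₁ x₂ x₃ : ℝ → ℝ),
    OrthFrame I (deriv γ) Z₁ Z₂ Z₃ ∧ Smooth3 I x₁ x₂ x₃ ∧
    ∀ s ∈ I,
      deriv (deriv γ) s = x₁ s • Z₁ s + x₂ s • Z₂ s + x₃ s • Z₃ s ∧
      deriv Z₁ s = x₁ s • deriv γ s ∧
      deriv Z₂ s = x₂ s • deriv γ s ∧
      deriv Z₃ s = x₃ s • deriv γ s

/-- `γ` admits a generalized Bishop frame of type C. -/
def AdmitsC (I : Set ℝ) (γ : ℝ → Fin 4 → ℝ) : Prop :=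
  ∃ (Z₁ Z₂ Z₃ : ℝ → Fin 4 → ℝ) (x₁ x₂ x₃ : ℝ → ℝ),
    OrthFrame I (deriv γ) Z₁ Z₂ Z₃ ∧ Smooth3 I x₁ x₂ x₃ ∧
    ∀ s ∈ I,
      deriv (deriv γ) s = x₁ s • Z₁ s + x₂ s • Z₂ s ∧
      deriv Z₁ s = x₁ s • deriv γ s + x₃ s • Z₃ s ∧
      deriv Z₂ s = x₂ s • deriv γ s ∧
      deriv Z₃ s = (-(x₃ s)) • Z₁ s

/-- `γ` admits a generalized Bishop frame of type D. -/
def AdmitsD (I : Set ℝ) (γ : ℝ → Fin 4 → ℝ) : Prop :=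
  ∃ (Z₁ Z₂ Z₃ : ℝ → Fin 4 → ℝ) (x₁ x₂ x₃ : ℝ → ℝ),
    OrthFrame I (deriv γ) Z₁ Z₂ Z₃ ∧ Smooth3 I x₁ x₂ x₃ ∧
    ∀ s ∈ I,
      deriv (deriv γ) s = x₁ s • Z₁ s ∧
      deriv Z₁ s = x₁ s • deriv γ s + x₂ s • Z₂ s + x₃ s • Z₃ s ∧
      deriv Z₂ s = (-(x₂ s)) • Z₁ s ∧
      deriv Z₃ s = (-(x₃ s)) • Z₁ s

/-- `γ` admits a generalized Bishop frame of type F. -/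
def AdmitsF (I : Set ℝ) (γ : ℝ → Fin 4 → ℝ) : Prop :=
  ∃ (Z₁ Z₂ Z₃ : ℝ → Fin 4 → ℝ) (x₁ x₂ x₃ : ℝ → ℝ),
    OrthFrame I (deriv γ) Z₁ Z₂ Z₃ ∧ Smooth3 I x₁ x₂ x₃ ∧
    ∀ s ∈ I,
      deriv (deriv γ) s = x₁ s • Z₁ s ∧
      deriv Z₁ s = x₁ s • deriv γ s + x₂ s • Z₂ s ∧
      deriv Z₂ s = (-(x₂ s)) • Z₁ s + x₃ s • Z₃ s ∧
      deriv Z₃ s = (-(x₃ s)) • Z₂ s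


set_option linter.unusedSectionVars false
set_option maxHeartbeats 1000000
open Filter Topology Matrix
open scoped NNReal

section ODE
variable {E : Type*} [NormedAddCommGroup E] [NormedSpace ℝ E] [CompleteSpace E]


variable {E : Type*} [NormedAddCommGroup E] [NormedSpace ℝ E] [CompleteSpace E]

/-- gluing two solutions on adjacent intervals -/
lemma glue_sol {v : ℝ → E → E} {a c b : ℝ} (hac : a ≤ c) (hcb : c ≤ b)
    {f g : ℝ → E} (hfg : f c = g c)
    (hf : ∀ t ∈ Icc a c, HasDerivWithinAt f (v t (f t)) (Icc a c) t)
    (hg : ∀ t ∈ Icc c b, HasDerivWithinAt g (v t (g t)) (Icc c b) t) :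
    ∃ h : ℝ → E, (∀ t ∈ Icc a c, h t = f t) ∧
      ∀ t ∈ Icc a b, HasDerivWithinAt h (v t (h t)) (Icc a b) t := by
  classical
  set h : ℝ → E := fun t => if t ≤ c then f t else g t with hh
  have heq1 : ∀ t ∈ Icc a c, h t = f t := fun t ht => by
    simp [hh, ht.2]
  have heq2 : ∀ t ∈ Icc c b, h t = g t := fun t ht => by
    by_cases htc : t ≤ c
    · have : t = c := le_antisymm htc ht.1
      simp [hh, this, hfg]
    · simp [hh, htc]
  refine ⟨h, heq1, fun t ht => ?_⟩
  have hunion : Icc a c ∪ Icc c b = Icc a b := Icc_union_Icc_eq_Icc hac hcb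
  have H1 : HasDerivWithinAt h (v t (h t)) (Icc a c) t := by
    by_cases htc : t ∈ Icc a c
    · have := (hf t htc).congr heq1 (heq1 t htc)
      rwa [heq1 t htc]
    · exact HasFDerivWithinAt.of_notMem_closure (by rwa [closure_Icc])
  have H2 : HasDerivWithinAt h (v t (h t)) (Icc c b) t := by
    by_cases htc : t ∈ Icc c b
    · have := (hg t htc).congr heq2 (heq2 t htc)
      rwa [heq2 t htc]
    · exact HasFDerivWithinAt.of_notMem_closure (by rwa [closure_Icc])
  have := H1.union H2
  rwa [hunion] at this

/-- short-time existence for a linear ODE -/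
lemma lin_small {v : ℝ → E → E} {a b : ℝ} {K : ℝ≥0}
    (hab : a ≤ b) (hsmall : b - a ≤ 1 / (2 * (K + 1)))
    (hlip : ∀ t ∈ Icc a b, LipschitzWith K (v t))
    (h0 : ∀ t, v t 0 = 0)
    (hc : ∀ x, ContinuousOn (fun t => v t x) (Icc a b)) (x₀ : E) :
    ∃ f : ℝ → E, f a = x₀ ∧ ∀ t ∈ Icc a b, HasDerivWithinAt f (v t (f t)) (Icc a b) t := by
  have hKpos : (0:ℝ) < 2 * ((K:ℝ) + 1) := by positivity
  have hpl : IsPicardLindelof v (tmin := a) (tmax := b) ⟨a, le_refl a, hab⟩ x₀ (‖x₀‖₊ + 1) 0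
      (K * (2 * ‖x₀‖₊ + 1)) K := by
    refine ⟨fun t ht => (hlip t ht).lipschitzOnWith,
      fun x _ => hc x, fun t ht x hx => ?_, ?_⟩
    · have h1 : ‖v t x - v t 0‖ ≤ K * ‖x - 0‖ := by
        simpa [dist_eq_norm] using (hlip t ht).dist_le_mul x 0
      have h2 : ‖x‖ ≤ ‖x₀‖ + (‖x₀‖ + 1) := by
        have e1 : ‖x - x₀‖ ≤ ‖x₀‖ + 1 := by simpa using mem_closedBall_iff_norm.mp hx
        have e2 : ‖x‖ ≤ ‖x₀‖ + ‖x - x₀‖ := norm_le_norm_add_norm_sub' x x₀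
        linarith
      simp only [NNReal.coe_mul, NNReal.coe_add, NNReal.coe_one, coe_nnnorm, NNReal.coe_ofNat]
      calc ‖v t x‖ = ‖v t x - v t 0‖ := by rw [h0 t, sub_zero]
        _ ≤ K * ‖x - 0‖ := h1
        _ = K * ‖x‖ := by rw [sub_zero]
        _ ≤ K * (2 * ‖x₀‖ + 1) := by
            apply mul_le_mul_of_nonneg_left _ (K.coe_nonneg)
            linarith
    · have hmax : max (b - a) (a - a) = b - a := by
        rw [sub_self]; exact max_eq_left (by linarith)
      simp only [NNReal.coe_mul, NNReal.coe_add, NNReal.coe_one, coe_nnnorm, NNReal.coe_ofNat,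
        NNReal.coe_zero, sub_zero]
      rw [hmax]
      have h3 : (K:ℝ) * (2 * ‖x₀‖ + 1) * (b - a) ≤ (K:ℝ) * (2 * ‖x₀‖ + 1) * (1 / (2 * (K + 1))) := by
        apply mul_le_mul_of_nonneg_left hsmall (by positivity)
      have h4 : (K:ℝ) * (2 * ‖x₀‖ + 1) * (1 / (2 * ((K:ℝ) + 1))) ≤ ‖x₀‖ + 1 := by
        rw [mul_one_div, div_le_iff₀ hKpos]
        nlinarith [K.coe_nonneg, norm_nonneg x₀]
      linarith
  exact hpl.exists_eq_forall_mem_Icc_hasDerivWithinAt₀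

/-- existence on a compact interval, forward from the left endpoint -/
lemma lin_Icc {v : ℝ → E → E} {a b : ℝ} {K : ℝ≥0}
    (hlip : ∀ t ∈ Icc a b, LipschitzWith K (v t))
    (h0 : ∀ t, v t 0 = 0)
    (hc : ∀ x, ContinuousOn (fun t => v t x) (Icc a b)) :
    ∀ (n : ℕ) (c : ℝ) (x₀ : E), c ∈ Icc a b → b - c ≤ n * (1 / (2 * ((K:ℝ) + 1))) →
      ∃ f : ℝ → E, f c = x₀ ∧ ∀ t ∈ Icc c b, HasDerivWithinAt f (v t (f t)) (Icc c b) t := by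
  have hδ : (0:ℝ) < 1 / (2 * ((K:ℝ) + 1)) := by positivity
  intro n
  induction n with
  | zero =>
    intro c x₀ hcmem hcb
    have hcb' : c = b := le_antisymm hcmem.2 (by simpa using hcb)
    subst hcb'
    refine ⟨fun _ => x₀, rfl, fun t ht => ?_⟩
    have ht' : t = c := le_antisymm ht.2 ht.1
    subst ht'
    rw [Icc_self]
    exact HasFDerivWithinAt.singleton
  | succ n ih =>
    intro c x₀ hcmem hcb
    set δ := 1 / (2 * ((K:ℝ) + 1)) with hδdef
    set c' := min b (c + δ) with hc'def
    have hcc' : c ≤ c' := le_min hcmem.2 (by linarith)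
    have hc'b : c' ≤ b := min_le_left _ _
    have hsub : Icc c c' ⊆ Icc a b := Icc_subset_Icc hcmem.1 hc'b
    obtain ⟨f₁, hf₁0, hf₁⟩ := lin_small hcc' (by
      have : c' ≤ c + δ := min_le_right _ _
      linarith) (fun t ht => hlip t (hsub ht)) h0
      (fun x => (hc x).mono hsub) x₀
    have hb_c' : b - c' ≤ n * δ := by
      rcases le_or_gt b (c + δ) with h | h
      · have : c' = b := min_eq_left h
        rw [this]; simp only [sub_self]; positivity
      · have : c' = c + δ := min_eq_right h.le
        rw [this]
        have : b - c ≤ (n+1) * δ := by push_cast at hcb ⊢; linarith [hcb]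
        push_cast
        linarith
    obtain ⟨f₂, hf₂0, hf₂⟩ := ih c' (f₁ c') ⟨le_trans hcmem.1 hcc', hc'b⟩ hb_c'
    obtain ⟨h, hh1, hh2⟩ := glue_sol hcc' hc'b (hf₂0.symm) hf₁ hf₂
    exact ⟨h, by rw [hh1 c ⟨le_refl c, hcc'⟩]; exact hf₁0, hh2⟩

/-- two-sided existence on a compact interval -/
lemma lin_Icc_two {v : ℝ → E → E} {a b t₀ : ℝ} {K : ℝ≥0}
    (ht₀ : t₀ ∈ Icc a b)
    (hlip : ∀ t ∈ Icc a b, LipschitzWith K (v t))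
    (h0 : ∀ t, v t 0 = 0)
    (hc : ∀ x, ContinuousOn (fun t => v t x) (Icc a b)) (x₀ : E) :
    ∃ f : ℝ → E, f t₀ = x₀ ∧ ∀ t ∈ Icc a b, HasDerivWithinAt f (v t (f t)) (Icc a b) t := by
  have hδ : (0:ℝ) < 1 / (2 * ((K:ℝ) + 1)) := by positivity
  -- forward solution on Icc t₀ b
  obtain ⟨n, hn⟩ := exists_nat_ge ((b - t₀) / (1 / (2 * ((K:ℝ) + 1))))
  have hfwd : b - t₀ ≤ n * (1 / (2 * ((K:ℝ) + 1))) := by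
    rw [div_le_iff₀ hδ] at hn; linarith
  obtain ⟨g, hg0, hg⟩ := lin_Icc (fun t ht => hlip t (Icc_subset_Icc ht₀.1 le_rfl ht)) h0
    (fun x => (hc x).mono (Icc_subset_Icc ht₀.1 le_rfl)) n t₀ x₀ ⟨le_rfl, ht₀.2⟩ hfwd
  -- backward: reflect time
  set w : ℝ → E → E := fun t x => -(v (2 * t₀ - t) x) with hw
  have hrefl : ∀ t ∈ Icc t₀ (2 * t₀ - a), 2 * t₀ - t ∈ Icc a b := by
    intro t ht
    constructor <;> [linarith [ht.2]; linarith [ht.1, ht₀.2]]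
  obtain ⟨m, hm⟩ := exists_nat_ge (((2 * t₀ - a) - t₀) / (1 / (2 * ((K:ℝ) + 1))))
  have hbwd : (2 * t₀ - a) - t₀ ≤ m * (1 / (2 * ((K:ℝ) + 1))) := by
    rw [div_le_iff₀ hδ] at hm; linarith
  have hwlip : ∀ t ∈ Icc t₀ (2 * t₀ - a), LipschitzWith K (w t) := by
    intro t ht
    exact (hlip _ (hrefl t ht)).neg
  have hw0 : ∀ t, w t 0 = 0 := fun t => by simp [hw, h0]
  have hwc : ∀ x, ContinuousOn (fun t => w t x) (Icc t₀ (2 * t₀ - a)) := by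
    intro x
    have hcont : ContinuousOn (fun t : ℝ => v (2 * t₀ - t) x) (Icc t₀ (2 * t₀ - a)) :=
      (hc x).comp (Continuous.continuousOn (by continuity)) hrefl
    exact hcont.neg
  obtain ⟨gR, hgR0, hgR⟩ := lin_Icc hwlip hw0 hwc m t₀ x₀ ⟨le_rfl, by linarith [ht₀.1]⟩ hbwd
  set fB : ℝ → E := fun t => gR (2 * t₀ - t) with hfB
  have hfBt₀ : fB t₀ = x₀ := by
    simp only [hfB]; rw [show 2 * t₀ - t₀ = t₀ by ring]; exact hgR0
  have hfBderiv : ∀ t ∈ Icc a t₀, HasDerivWithinAt fB (v t (fB t)) (Icc a t₀) t := by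
    intro t ht
    have hmem : 2 * t₀ - t ∈ Icc t₀ (2 * t₀ - a) := by
      constructor <;> [linarith [ht.2]; linarith [ht.1]]
    have hgRd := hgR (2 * t₀ - t) hmem
    have hφ : HasDerivWithinAt (fun s : ℝ => 2 * t₀ - s) (-1) (Icc a t₀) t := by
      simpa using ((hasDerivAt_id' t).const_sub (2*t₀)).hasDerivWithinAt
    have hmaps : MapsTo (fun s : ℝ => 2 * t₀ - s) (Icc a t₀) (Icc t₀ (2 * t₀ - a)) := by
      intro s hs
      simp only [mem_Icc] at hs ⊢
      constructor <;> linarith [hs.1, hs.2]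
    have := HasDerivWithinAt.scomp t hgRd hφ hmaps
    simp only [hw] at this
    convert this using 1
    · rfl
    · show v t (gR (2 * t₀ - t)) = _
      rw [show 2 * t₀ - (2 * t₀ - t) = t by ring, neg_one_smul, neg_neg]
  obtain ⟨h, hh1, hh2⟩ := glue_sol ht₀.1 ht₀.2 (by rw [hfBt₀, hg0]) hfBderiv hg
  exact ⟨h, by rw [hh1 t₀ ⟨ht₀.1, le_rfl⟩]; exact hfBt₀, hh2⟩

/-- uniqueness of solutions on a compact interval, from a common point -/
lemma lin_unique {v : ℝ → E → E} {a b t₀ : ℝ} {K : ℝ≥0}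
    (ht₀ : t₀ ∈ Icc a b)
    (hlip : ∀ t ∈ Icc a b, LipschitzWith K (v t))
    {f g : ℝ → E}
    (hf : ∀ t ∈ Icc a b, HasDerivWithinAt f (v t (f t)) (Icc a b) t)
    (hg : ∀ t ∈ Icc a b, HasDerivWithinAt g (v t (g t)) (Icc a b) t)
    (heq : f t₀ = g t₀) : EqOn f g (Icc a b) := by
  classical
  set S : ℝ → Set E := fun t => if t ∈ Icc a b then univ else ∅ with hS
  have hv : ∀ t, LipschitzOnWith K (v t) (S t) := by
    intro t
    by_cases h : t ∈ Icc a b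
    · simp only [hS, if_pos h]
      exact (hlip t h).lipschitzOnWith
    · simp only [hS, if_neg h]
      exact lipschitzOnWith_empty _ _
  have hmemS : ∀ t ∈ Icc a b, ∀ x : E, x ∈ S t := by
    intro t ht x
    simp only [hS]
    rw [if_pos ht]
    trivial
  have hfc : ContinuousOn f (Icc a b) := fun t ht => (hf t ht).continuousWithinAt
  have hgc : ContinuousOn g (Icc a b) := fun t ht => (hg t ht).continuousWithinAt
  have hsplit : Icc a t₀ ∪ Icc t₀ b = Icc a b := Icc_union_Icc_eq_Icc ht₀.1 ht₀.2
  rw [← hsplit]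
  apply EqOn.union
  · have hsub : ∀ t, t ∈ Ioc a t₀ → t ∈ Icc a b := fun t ht => ⟨ht.1.le, le_trans ht.2 ht₀.2⟩
    exact ODE_solution_unique_of_mem_Icc_left (fun t _ => hv t)
      (hfc.mono (Icc_subset_Icc le_rfl ht₀.2))
      (fun t ht => (hf t (hsub t ht)).mono_of_mem_nhdsWithin
        (Icc_mem_nhdsLE_of_mem ⟨ht.1, le_trans ht.2 ht₀.2⟩))
      (fun t ht => hmemS t (hsub t ht) _)
      (hgc.mono (Icc_subset_Icc le_rfl ht₀.2))
      (fun t ht => (hg t (hsub t ht)).mono_of_mem_nhdsWithin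
        (Icc_mem_nhdsLE_of_mem ⟨ht.1, le_trans ht.2 ht₀.2⟩))
      (fun t ht => hmemS t (hsub t ht) _) heq
  · have hsub : ∀ t, t ∈ Ico t₀ b → t ∈ Icc a b := fun t ht => ⟨le_trans ht₀.1 ht.1, ht.2.le⟩
    exact ODE_solution_unique_of_mem_Icc_right (fun t _ => hv t)
      (hfc.mono (Icc_subset_Icc ht₀.1 le_rfl))
      (fun t ht => (hf t (hsub t ht)).mono_of_mem_nhdsWithin
        (Icc_mem_nhdsGE_of_mem ⟨le_trans ht₀.1 ht.1, ht.2⟩))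
      (fun t ht => hmemS t (hsub t ht) _)
      (hgc.mono (Icc_subset_Icc ht₀.1 le_rfl))
      (fun t ht => (hg t (hsub t ht)).mono_of_mem_nhdsWithin
        (Icc_mem_nhdsGE_of_mem ⟨le_trans ht₀.1 ht.1, ht.2⟩))
      (fun t ht => hmemS t (hsub t ht) _) heq

/-- Global existence for a (locally-in-time uniformly) Lipschitz linear-type ODE on an
open order-connected set. -/
lemma lin_global {v : ℝ → E → E} {I : Set ℝ} (hIopen : IsOpen I) (hIconn : I.OrdConnected)
    (hlip : ∀ a b : ℝ, Icc a b ⊆ I → ∃ K : ℝ≥0, ∀ t ∈ Icc a b, LipschitzWith K (v t))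
    (h0 : ∀ t, v t 0 = 0) (hc : ∀ x, ContinuousOn (fun t => v t x) I)
    {s₀ : ℝ} (hs₀ : s₀ ∈ I) (x₀ : E) :
    ∃ f : ℝ → E, f s₀ = x₀ ∧ ∀ s ∈ I, HasDerivAt f (v s (f s)) s := by
  classical
  have exist : ∀ c d : ℝ, c ∈ I → d ∈ I → c ≤ s₀ → s₀ ≤ d →
      ∃ f : ℝ → E, f s₀ = x₀ ∧ ∀ t ∈ Icc c d, HasDerivWithinAt f (v t (f t)) (Icc c d) t := by
    intro c d hcI hdI hcs hsd
    have hsub : Icc c d ⊆ I := hIconn.out hcI hdI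
    obtain ⟨K, hK⟩ := hlip c d hsub
    exact lin_Icc_two ⟨hcs, hsd⟩ hK h0 (fun x => (hc x).mono hsub) x₀
  -- the global function
  set F : ℝ → E := fun s =>
    if h : s ∈ I then
      Classical.choose (exist (min s s₀) (max s s₀)
        (by rcases min_choice s s₀ with h' | h' <;> rw [h'] <;> [exact h; exact hs₀])
        (by rcases max_choice s s₀ with h' | h' <;> rw [h'] <;> [exact h; exact hs₀])
        (min_le_right _ _) (le_max_right _ _)) s
    else 0 with hF
  have key : ∀ c d : ℝ, ∀ (hcI : c ∈ I) (hdI : d ∈ I) (hcs : c ≤ s₀) (hsd : s₀ ≤ d),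
      ∀ f : ℝ → E, f s₀ = x₀ →
      (∀ t ∈ Icc c d, HasDerivWithinAt f (v t (f t)) (Icc c d) t) →
      ∀ s ∈ Icc c d, F s = f s := by
    intro c d hcI hdI hcs hsd f hf0 hfd s hs
    have hsI : s ∈ I := hIconn.out hcI hdI hs
    have hminI : min s s₀ ∈ I := by
      rcases min_choice s s₀ with h' | h' <;> rw [h'] <;> [exact hsI; exact hs₀]
    have hmaxI : max s s₀ ∈ I := by
      rcases max_choice s s₀ with h' | h' <;> rw [h'] <;> [exact hsI; exact hs₀]
    have hFs : F s = Classical.choose (exist (min s s₀) (max s s₀) hminI hmaxI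
        (min_le_right _ _) (le_max_right _ _)) s := by
      rw [hF]; exact dif_pos hsI
    set g := Classical.choose (exist (min s s₀) (max s s₀) hminI hmaxI
        (min_le_right _ _) (le_max_right _ _)) with hg
    obtain ⟨hg0, hgd⟩ := Classical.choose_spec (exist (min s s₀) (max s s₀) hminI hmaxI
        (min_le_right _ _) (le_max_right _ _))
    -- both g and f solve on Icc (min s s₀) (max s s₀)
    have hsmall : Icc (min s s₀) (max s s₀) ⊆ Icc c d := by
      apply Icc_subset_Icc
      · exact le_min hs.1 hcs
      · exact max_le hs.2 hsd
    obtain ⟨K, hK⟩ := hlip (min s s₀) (max s s₀) ((hsmall.trans (hIconn.out hcI hdI)))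
    have hfd' : ∀ t ∈ Icc (min s s₀) (max s s₀),
        HasDerivWithinAt f (v t (f t)) (Icc (min s s₀) (max s s₀)) t :=
      fun t ht => (hfd t (hsmall ht)).mono (by exact hsmall)
    have ht₀mem : s₀ ∈ Icc (min s s₀) (max s s₀) := ⟨min_le_right _ _, le_max_right _ _⟩
    have := lin_unique ht₀mem hK hgd hfd' (by rw [hg0, hf0])
    have hsmem : s ∈ Icc (min s s₀) (max s s₀) := ⟨min_le_left _ _, le_max_left _ _⟩
    rw [hFs]
    exact this hsmem
  have hFs₀ : F s₀ = x₀ := by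
    obtain ⟨f, hf0, hfd⟩ := exist s₀ s₀ hs₀ hs₀ le_rfl le_rfl
    rw [key s₀ s₀ hs₀ hs₀ le_rfl le_rfl f hf0 hfd s₀ ⟨le_rfl, le_rfl⟩, hf0]
  refine ⟨F, hFs₀, fun s hs => ?_⟩
  obtain ⟨ε, hε, hball⟩ := Metric.isOpen_iff.mp hIopen s hs
  have hIccsub : Icc (s - ε/2) (s + ε/2) ⊆ I := by
    intro t ht
    apply hball
    rw [Metric.mem_ball, Real.dist_eq, abs_lt]
    constructor <;> [linarith [ht.1]; linarith [ht.2]]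
  have hsmI : s - ε/2 ∈ I := hIccsub ⟨le_rfl, by linarith⟩
  have hspI : s + ε/2 ∈ I := hIccsub ⟨by linarith, le_rfl⟩
  set c := min (s - ε/2) s₀ with hc'
  set d := max (s + ε/2) s₀ with hd'
  have hcI : c ∈ I := by rcases min_choice (s - ε/2) s₀ with h' | h' <;> rw [hc', h'] <;>
    [exact hsmI; exact hs₀]
  have hdI : d ∈ I := by rcases max_choice (s + ε/2) s₀ with h' | h' <;> rw [hd', h'] <;>
    [exact hspI; exact hs₀]
  obtain ⟨f, hf0, hfd⟩ := exist c d hcI hdI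
    (le_trans (min_le_right _ _) le_rfl) (le_max_right _ _)
  have hnbhd : Icc c d ∈ 𝓝 s := by
    apply mem_of_superset (Ioo_mem_nhds (show c < s by
      have : c ≤ s - ε/2 := min_le_left _ _; linarith) (show s < d by
      have : s + ε/2 ≤ d := le_max_left _ _; linarith))
    exact Ioo_subset_Icc_self
  have hsmem : s ∈ Icc c d := by
    constructor
    · exact le_trans (min_le_left _ _) (by linarith)
    · exact le_trans (by linarith) (le_max_left _ _ : s + ε/2 ≤ d)
  have hfderiv : HasDerivAt f (v s (f s)) s := (hfd s hsmem).hasDerivAt hnbhd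
  have hFf : F =ᶠ[𝓝 s] f := by
    apply Filter.eventuallyEq_of_mem hnbhd
    intro t ht
    exact key c d hcI hdI (min_le_right _ _) (le_max_right _ _) f hf0 hfd t ht
  have hFseq : F s = f s := key c d hcI hdI (min_le_right _ _) (le_max_right _ _) f hf0 hfd s hsmem
  have := hfderiv.congr_of_eventuallyEq hFf
  rwa [hFseq]

end ODE

lemma mink_symm (x y : Fin 4 → ℝ) : mink x y = mink y x := by simp [mink]; ring
lemma mink_zero_right (a : Fin 4 → ℝ) : mink a 0 = 0 := by simp [mink]
lemma mink_sub_right (a x y : Fin 4 → ℝ) : mink a (x - y) = mink a x - mink a y := by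
  simp [mink, Pi.sub_apply]; ring
lemma mink_smul_right (a : Fin 4 → ℝ) (c : ℝ) (x : Fin 4 → ℝ) :
    mink a (c • x) = c * mink a x := by
  simp [mink, Pi.smul_apply, smul_eq_mul]; ring

lemma hasDerivAt_pi_apply {f : ℝ → Fin 4 → ℝ} {f' : Fin 4 → ℝ} {s : ℝ}
    (hf : HasDerivAt f f' s) (i : Fin 4) :
    HasDerivAt (fun t => f t i) (f' i) s := by
  have := (ContinuousLinearMap.proj (R := ℝ) (φ := fun _ : Fin 4 => ℝ) i).hasFDerivAt.comp_hasDerivAt s hf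
  exact this

lemma hasDerivAt_mink {f g : ℝ → Fin 4 → ℝ} {f' g' : Fin 4 → ℝ} {s : ℝ}
    (hf : HasDerivAt f f' s) (hg : HasDerivAt g g' s) :
    HasDerivAt (fun t => mink (f t) (g t)) (mink f' (g s) + mink (f s) g') s := by
  have h0 := (hasDerivAt_pi_apply hf 0).mul (hasDerivAt_pi_apply hg 0)
  have h1 := (hasDerivAt_pi_apply hf 1).mul (hasDerivAt_pi_apply hg 1)
  have h2 := (hasDerivAt_pi_apply hf 2).mul (hasDerivAt_pi_apply hg 2)
  have h3 := (hasDerivAt_pi_apply hf 3).mul (hasDerivAt_pi_apply hg 3)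
  have := ((h0.neg.add h1).add h2).add h3
  refine (this.congr_deriv (by simp only [mink]; ring)).congr_of_eventuallyEq
    (Filter.Eventually.of_forall fun t => by simp [mink])

lemma contDiffOn_pi_apply {n : WithTop ℕ∞} {f : ℝ → Fin 4 → ℝ} {I : Set ℝ}
    (hf : ContDiffOn ℝ n f I) (i : Fin 4) :
    ContDiffOn ℝ n (fun t => f t i) I :=
  (ContinuousLinearMap.proj (R := ℝ) (φ := fun _ : Fin 4 => ℝ) i).contDiff.comp_contDiffOn hf

lemma contDiffOn_mink {n : WithTop ℕ∞} {f g : ℝ → Fin 4 → ℝ} {I : Set ℝ}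
    (hf : ContDiffOn ℝ n f I) (hg : ContDiffOn ℝ n g I) :
    ContDiffOn ℝ n (fun s => mink (f s) (g s)) I := by
  simp only [mink]
  exact ((((contDiffOn_pi_apply hf 0).mul (contDiffOn_pi_apply hg 0)).neg.add
    ((contDiffOn_pi_apply hf 1).mul (contDiffOn_pi_apply hg 1))).add
    ((contDiffOn_pi_apply hf 2).mul (contDiffOn_pi_apply hg 2))).add
    ((contDiffOn_pi_apply hf 3).mul (contDiffOn_pi_apply hg 3))

lemma abs_mink_le (a b : Fin 4 → ℝ) : |mink a b| ≤ 4 * ‖a‖ * ‖b‖ := by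
  have h : ∀ i : Fin 4, |a i * b i| ≤ ‖a‖ * ‖b‖ := by
    intro i
    rw [abs_mul]
    have ha : |a i| ≤ ‖a‖ := by simpa [Real.norm_eq_abs] using norm_le_pi_norm a i
    have hb : |b i| ≤ ‖b‖ := by simpa [Real.norm_eq_abs] using norm_le_pi_norm b i
    exact mul_le_mul ha hb (abs_nonneg _) (norm_nonneg _)
  have h0 := h 0; have h1 := h 1; have h2 := h 2; have h3 := h 3
  simp only [mink]
  have habs : |(-(a 0 * b 0))| = |a 0 * b 0| := abs_neg _
  calc |(-(a 0 * b 0) + a 1 * b 1 + a 2 * b 2 + a 3 * b 3)|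
      ≤ |(-(a 0 * b 0) + a 1 * b 1 + a 2 * b 2)| + |a 3 * b 3| := abs_add_le _ _
    _ ≤ (|(-(a 0 * b 0) + a 1 * b 1)| + |a 2 * b 2|) + |a 3 * b 3| :=
        add_le_add_left (abs_add_le _ _) _
    _ ≤ ((|(-(a 0 * b 0))| + |a 1 * b 1|) + |a 2 * b 2|) + |a 3 * b 3| :=
        add_le_add_left (add_le_add_left (abs_add_le _ _) _) _
    _ = |a 0 * b 0| + |a 1 * b 1| + |a 2 * b 2| + |a 3 * b 3| := by rw [habs]
    _ ≤ ‖a‖ * ‖b‖ + ‖a‖ * ‖b‖ + ‖a‖ * ‖b‖ + ‖a‖ * ‖b‖ := by gcongr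
    _ = 4 * ‖a‖ * ‖b‖ := by ring

/-- constancy from vanishing derivative on an open convex set -/
lemma const_of_hasDerivAt_zero {I : Set ℝ} (hIopen : IsOpen I) (hIconv : Convex ℝ I)
    {φ : ℝ → ℝ} (h : ∀ s ∈ I, HasDerivAt φ 0 s) {x y : ℝ} (hx : x ∈ I) (hy : y ∈ I) :
    φ x = φ y := by
  apply hIconv.is_const_of_fderivWithin_eq_zero
    (fun s hs => (h s hs).differentiableAt.differentiableWithinAt) _ hx hy
  intro s hs
  rw [fderivWithin_of_isOpen hIopen hs, (h s hs).hasFDerivAt.fderiv]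
  ext u
  simp

/-- smoothness bootstrap for solutions of the frame ODE -/
lemma contDiffOn_of_frame_ode {I : Set ℝ} (hIopen : IsOpen I)
    {Z A T : ℝ → Fin 4 → ℝ}
    (hA : ContDiffOn ℝ (⊤ : ℕ∞) A I) (hT : ContDiffOn ℝ (⊤ : ℕ∞) T I)
    (hZ : ∀ s ∈ I, HasDerivAt Z (mink (A s) (Z s) • T s) s) :
    ContDiffOn ℝ (⊤ : ℕ∞) Z I := by
  suffices h : ∀ n : ℕ, ContDiffOn ℝ n Z I by
    exact contDiffOn_infty.mpr h
  intro n
  induction n with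
  | zero =>
    rw [show ((0:ℕ) : WithTop ℕ∞) = 0 from rfl, contDiffOn_zero]
    exact fun s hs => (hZ s hs).continuousAt.continuousWithinAt
  | succ n ih =>
    have hdiff : DifferentiableOn ℝ Z I :=
      fun s hs => (hZ s hs).differentiableAt.differentiableWithinAt
    rw [show ((n+1:ℕ) : WithTop ℕ∞) = (n : WithTop ℕ∞) + 1 by push_cast; rfl,
      contDiffOn_succ_iff_deriv_of_isOpen hIopen]
    refine ⟨hdiff, by simp, ?_⟩
    have hAn : ContDiffOn ℝ n A I := hA.of_le (by exact_mod_cast le_top)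
    have hTn : ContDiffOn ℝ n T I := hT.of_le (by exact_mod_cast le_top)
    have : ContDiffOn ℝ n (fun s => mink (A s) (Z s) • T s) I :=
      (contDiffOn_mink hAn ih).smul hTn
    exact this.congr (fun s hs => (hZ s hs).deriv)

/-- completeness relation for a Minkowski-orthonormal frame -/
lemma mink_complete (T z₁ z₂ z₃ w : Fin 4 → ℝ)
    (hTT : mink T T = -1)
    (h11 : mink z₁ z₁ = 1) (h22 : mink z₂ z₂ = 1) (h33 : mink z₃ z₃ = 1)
    (h12 : mink z₁ z₂ = 0) (h13 : mink z₁ z₃ = 0) (h23 : mink z₂ z₃ = 0)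
    (hT1 : mink T z₁ = 0) (hT2 : mink T z₂ = 0) (hT3 : mink T z₃ = 0)
    (hwT : mink T w = 0) :
    w = mink w z₁ • z₁ + mink w z₂ • z₂ + mink w z₃ • z₃ := by
  simp only [mink] at hTT h11 h22 h33 h12 h13 h23 hT1 hT2 hT3 hwT
  set B : Matrix (Fin 4) (Fin 4) ℝ := Matrix.of ![T, z₁, z₂, z₃] with hB
  set η : Matrix (Fin 4) (Fin 4) ℝ :=
    Matrix.of ![![-1,0,0,0], ![0,1,0,0], ![0,0,1,0], ![0,0,0,1]] with hη
  have h1 : B * η * Bᵀ = η := by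
    ext i j
    fin_cases i <;> fin_cases j <;>
      simp [hB, hη, Matrix.mul_apply, Matrix.transpose_apply, Fin.sum_univ_four, Matrix.vecHead, Matrix.vecTail, Function.comp, show Fin.succ (2:Fin 3) = (3:Fin 4) from rfl] <;>
      linarith [hTT, h11, h22, h33, h12, h13, h23, hT1, hT2, hT3]
  have hη2 : η * η = 1 := by
    ext i j
    fin_cases i <;> fin_cases j <;>
      simp [hη, Matrix.mul_apply, Fin.sum_univ_four, Matrix.one_apply, Matrix.vecHead,
        Matrix.vecTail, Function.comp, show Fin.succ (2:Fin 3) = (3:Fin 4) from rfl]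
  have h2 : B * (η * Bᵀ * η) = 1 := by
    calc B * (η * Bᵀ * η) = B * η * Bᵀ * η := by rw [← Matrix.mul_assoc, ← Matrix.mul_assoc]
      _ = η * η := by rw [h1]
      _ = 1 := hη2
  have h3 : (η * Bᵀ * η) * B = 1 := mul_eq_one_comm.mp h2
  have hG : ∀ i j : Fin 4, ((η * Bᵀ * η) * B) i j = (1 : Matrix (Fin 4) (Fin 4) ℝ) i j :=
    fun i j => by rw [h3]
  funext j
  fin_cases j
  · have g0 := hG 0 0; have g1 := hG 1 0; have g2 := hG 2 0; have g3 := hG 3 0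
    simp [hB, hη, Matrix.mul_apply, Matrix.transpose_apply, Fin.sum_univ_four,
      Matrix.vecHead, Matrix.vecTail, Function.comp, Matrix.one_apply, Matrix.vecMul, dotProduct,
      show Fin.succ (2:Fin 3) = (3:Fin 4) from rfl] at g0 g1 g2 g3
    simp only [Pi.add_apply, Pi.smul_apply, smul_eq_mul, mink,
      show (⟨0, by omega⟩ : Fin 4) = 0 from rfl]
    linear_combination (-(w 0)) * g0 - w 1 * g1 - w 2 * g2 - w 3 * g3 - T 0 * hwT
  · have g0 := hG 0 1; have g1 := hG 1 1; have g2 := hG 2 1; have g3 := hG 3 1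
    simp [hB, hη, Matrix.mul_apply, Matrix.transpose_apply, Fin.sum_univ_four,
      Matrix.vecHead, Matrix.vecTail, Function.comp, Matrix.one_apply, Matrix.vecMul, dotProduct,
      show Fin.succ (2:Fin 3) = (3:Fin 4) from rfl] at g0 g1 g2 g3
    simp only [Pi.add_apply, Pi.smul_apply, smul_eq_mul, mink,
      show (⟨1, by omega⟩ : Fin 4) = 1 from rfl]
    linear_combination (-(w 0)) * g0 - w 1 * g1 - w 2 * g2 - w 3 * g3 - T 1 * hwT
  · have g0 := hG 0 2; have g1 := hG 1 2; have g2 := hG 2 2; have g3 := hG 3 2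
    simp [hB, hη, Matrix.mul_apply, Matrix.transpose_apply, Fin.sum_univ_four,
      Matrix.vecHead, Matrix.vecTail, Function.comp, Matrix.one_apply, Matrix.vecMul, dotProduct,
      show Fin.succ (2:Fin 3) = (3:Fin 4) from rfl] at g0 g1 g2 g3
    simp only [Pi.add_apply, Pi.smul_apply, smul_eq_mul, mink,
      show (⟨2, by omega⟩ : Fin 4) = 2 from rfl]
    linear_combination (-(w 0)) * g0 - w 1 * g1 - w 2 * g2 - w 3 * g3 - T 2 * hwT
  · have g0 := hG 0 3; have g1 := hG 1 3; have g2 := hG 2 3; have g3 := hG 3 3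
    simp [hB, hη, Matrix.mul_apply, Matrix.transpose_apply, Fin.sum_univ_four,
      Matrix.vecHead, Matrix.vecTail, Function.comp, Matrix.one_apply, Matrix.vecMul, dotProduct,
      show Fin.succ (2:Fin 3) = (3:Fin 4) from rfl] at g0 g1 g2 g3
    simp only [Pi.add_apply, Pi.smul_apply, smul_eq_mul, mink,
      show (⟨3, by omega⟩ : Fin 4) = 3 from rfl]
    linear_combination (-(w 0)) * g0 - w 1 * g1 - w 2 * g2 - w 3 * g3 - T 3 * hwT

/-- any unit time-like vector can be completed to a Minkowski-orthonormal frame -/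
lemma exists_initial_frame (T₀ : Fin 4 → ℝ) (hT : mink T₀ T₀ = -1) :
    ∃ z₁ z₂ z₃ : Fin 4 → ℝ,
      mink z₁ z₁ = 1 ∧ mink z₂ z₂ = 1 ∧ mink z₃ z₃ = 1 ∧
      mink z₁ z₂ = 0 ∧ mink z₁ z₃ = 0 ∧ mink z₂ z₃ = 0 ∧
      mink T₀ z₁ = 0 ∧ mink T₀ z₂ = 0 ∧ mink T₀ z₃ = 0 := by
  classical
  simp only [mink] at hT
  set w : Fin 4 → ℝ := if 0 < T₀ 0 then T₀ else -T₀ with hwdef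
  have hww : -(w 0 * w 0) + w 1 * w 1 + w 2 * w 2 + w 3 * w 3 = -1 := by
    by_cases h : 0 < T₀ 0 <;> simp [hwdef, h] <;> linarith
  have hw0 : 1 ≤ w 0 := by
    have hsq : 1 ≤ w 0 * w 0 := by nlinarith [sq_nonneg (w 1), sq_nonneg (w 2), sq_nonneg (w 3)]
    have hpos : 0 < w 0 := by
      by_cases h : 0 < T₀ 0
      · simp only [hwdef, if_pos h]; exact h
      · have hw0eq : w 0 = -T₀ 0 := by simp [hwdef, h]
        have h' : T₀ 0 ≤ 0 := le_of_not_gt h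
        rcases lt_or_eq_of_le h' with h'' | h''
        · rw [hw0eq]; linarith
        · exfalso; rw [hw0eq, h''] at hsq; norm_num at hsq
    nlinarith
  have hne : 1 + w 0 ≠ 0 := by linarith
  set α : ℝ := 1 / (1 + w 0) with hα
  set z₁ : Fin 4 → ℝ := ![w 1, 1 + α * w 1 * w 1, α * w 1 * w 2, α * w 1 * w 3] with hz₁
  set z₂ : Fin 4 → ℝ := ![w 2, α * w 2 * w 1, 1 + α * w 2 * w 2, α * w 2 * w 3] with hz₂
  set z₃ : Fin 4 → ℝ := ![w 3, α * w 3 * w 1, α * w 3 * w 2, 1 + α * w 3 * w 3] with hz₃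
  have hTw : ∀ u : Fin 4 → ℝ, mink T₀ u = 0 ↔
      -(w 0 * u 0) + w 1 * u 1 + w 2 * u 2 + w 3 * u 3 = 0 := by
    intro u
    by_cases h : 0 < T₀ 0 <;> simp [mink, hwdef, h] <;> constructor <;> intro h' <;> linarith
  refine ⟨z₁, z₂, z₃, ?_, ?_, ?_, ?_, ?_, ?_, ?_, ?_, ?_⟩
  · simp only [mink, hz₁, hα]; simp; field_simp
    linear_combination (w 1 * w 1) * hww
  · simp only [mink, hz₂, hα]; simp; field_simp
    linear_combination (w 2 * w 2) * hww
  · simp only [mink, hz₃, hα]; simp; field_simp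
    linear_combination (w 3 * w 3) * hww
  · simp only [mink, hz₁, hz₂, hα]; simp; field_simp
    linear_combination (w 1 * w 2) * hww
  · simp only [mink, hz₁, hz₃, hα]; simp; field_simp
    linear_combination (w 1 * w 3) * hww
  · simp only [mink, hz₂, hz₃, hα]; simp; field_simp
    linear_combination (w 2 * w 3) * hww
  · rw [hTw]; simp only [hz₁, hα]; simp; field_simp
    linear_combination (w 1) * hww
  · rw [hTw]; simp only [hz₂, hα]; simp; field_simp
    linear_combination (w 2) * hww
  · rw [hTw]; simp only [hz₃, hα]; simp; field_simp
    linear_combination (w 3) * hww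

/-- Bishop's theorem in Lorentz space: every time-like curve parametrized
by proper time admits a generalized Bishop frame of type B. -/
theorem stmt_7 (I : Set ℝ) (hIopen : IsOpen I) (hIconn : I.OrdConnected)
    (γ : ℝ → Fin 4 → ℝ) (hγ : ProperTime I γ) :
    ∃ (Z₁ Z₂ Z₃ : ℝ → Fin 4 → ℝ) (b₁ b₂ b₃ : ℝ → ℝ),
      OrthFrame I (deriv γ) Z₁ Z₂ Z₃ ∧ Smooth3 I b₁ b₂ b₃ ∧
      ∀ s ∈ I,
        deriv (deriv γ) s = b₁ s • Z₁ s + b₂ s • Z₂ s + b₃ s • Z₃ s ∧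
        deriv Z₁ s = b₁ s • deriv γ s ∧
        deriv Z₂ s = b₂ s • deriv γ s ∧
        deriv Z₃ s = b₃ s • deriv γ s := by
  classical
  obtain ⟨hγs, hγu⟩ := hγ
  rcases I.eq_empty_or_nonempty with hI | ⟨s₀, hs₀⟩
  · subst hI
    exact ⟨fun _ => ![0,1,0,0], fun _ => ![0,0,1,0], fun _ => ![0,0,0,1],
      fun _ => 0, fun _ => 0, fun _ => 0,
      ⟨contDiffOn_const, contDiffOn_const, contDiffOn_const,
        fun s hs => absurd hs (notMem_empty s)⟩,
      ⟨contDiffOn_const, contDiffOn_const, contDiffOn_const⟩,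
      fun s hs => absurd hs (notMem_empty s)⟩
  have hIconv : Convex ℝ I := convex_iff_ordConnected.mpr hIconn
  set T := deriv γ with hTdef
  set A := deriv T with hAdef
  have hTsm : ContDiffOn ℝ (⊤:ℕ∞) T I :=
    ((contDiffOn_infty_iff_deriv_of_isOpen hIopen).mp hγs).2
  have hAsm : ContDiffOn ℝ (⊤:ℕ∞) A I :=
    ((contDiffOn_infty_iff_deriv_of_isOpen hIopen).mp hTsm).2
  have hT' : ∀ s ∈ I, HasDerivAt T (A s) s := fun s hs =>
    ((hTsm.differentiableOn (by simp)).differentiableAt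
      (hIopen.mem_nhds hs)).hasDerivAt
  have hTT : ∀ s ∈ I, mink (T s) (T s) = -1 := hγu
  have hTA : ∀ s ∈ I, mink (T s) (A s) = 0 := by
    intro s hs
    have hd : HasDerivAt (fun t => mink (T t) (T t)) (mink (A s) (T s) + mink (T s) (A s)) s :=
      hasDerivAt_mink (hT' s hs) (hT' s hs)
    have hconst : (fun t => mink (T t) (T t)) =ᶠ[𝓝 s] fun _ => (-1:ℝ) := by
      filter_upwards [hIopen.mem_nhds hs] with t ht using hTT t ht
    have h0 : deriv (fun t => mink (T t) (T t)) s = 0 := by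
      rw [hconst.deriv_eq]; exact deriv_const s _
    rw [hd.deriv] at h0
    have hsym := mink_symm (A s) (T s)
    linarith
  set v : ℝ → (Fin 4 → ℝ) → (Fin 4 → ℝ) := fun t x => mink (A t) x • T t with hv
  have h0v : ∀ t, v t 0 = 0 := fun t => by simp [hv, mink_zero_right]
  have hcv : ∀ x, ContinuousOn (fun t => v t x) I := fun x =>
    ((contDiffOn_mink hAsm contDiffOn_const).continuousOn).smul hTsm.continuousOn
  have hlipv : ∀ a b : ℝ, Icc a b ⊆ I → ∃ K : NNReal, ∀ t ∈ Icc a b, LipschitzWith K (v t) := by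
    intro a b hab
    obtain ⟨MA, hMA⟩ := isCompact_Icc.exists_bound_of_continuousOn (hAsm.continuousOn.mono hab)
    obtain ⟨MT, hMT⟩ := isCompact_Icc.exists_bound_of_continuousOn (hTsm.continuousOn.mono hab)
    refine ⟨Real.toNNReal (4 * MA * MT), fun t ht => LipschitzWith.of_dist_le_mul fun x y => ?_⟩
    rw [dist_eq_norm, dist_eq_norm]
    have hdiffv : v t x - v t y = mink (A t) (x - y) • T t := by
      simp only [hv, mink_sub_right, sub_smul]
    rw [hdiffv, norm_smul]
    have hMA' := hMA t ht
    have hMT' := hMT t ht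
    have hMAnn : 0 ≤ MA := le_trans (norm_nonneg _) hMA'
    have hMTnn : 0 ≤ MT := le_trans (norm_nonneg _) hMT'
    have h1 : ‖mink (A t) (x - y)‖ ≤ 4 * MA * ‖x - y‖ := by
      rw [Real.norm_eq_abs]
      calc |mink (A t) (x - y)| ≤ 4 * ‖A t‖ * ‖x - y‖ := abs_mink_le _ _
        _ ≤ 4 * MA * ‖x - y‖ := by gcongr
    calc ‖mink (A t) (x - y)‖ * ‖T t‖ ≤ (4 * MA * ‖x - y‖) * MT := by
          apply mul_le_mul h1 hMT' (norm_nonneg _) (by positivity)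
      _ = (4 * MA * MT) * ‖x - y‖ := by ring
      _ ≤ (Real.toNNReal (4 * MA * MT) : ℝ) * ‖x - y‖ := by
          gcongr
          exact le_max_left _ _
  have hTT0 : mink (T s₀) (T s₀) = -1 := hTT s₀ hs₀
  obtain ⟨z₁, z₂, z₃, e11, e22, e33, e12, e13, e23, eT1, eT2, eT3⟩ :=
    exists_initial_frame (T s₀) hTT0
  obtain ⟨Z₁, hZ₁0, hZ₁⟩ := lin_global hIopen hIconn hlipv h0v hcv hs₀ z₁
  obtain ⟨Z₂, hZ₂0, hZ₂⟩ := lin_global hIopen hIconn hlipv h0v hcv hs₀ z₂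
  obtain ⟨Z₃, hZ₃0, hZ₃⟩ := lin_global hIopen hIconn hlipv h0v hcv hs₀ z₃
  set b₁ : ℝ → ℝ := fun s => mink (A s) (Z₁ s) with hb₁
  set b₂ : ℝ → ℝ := fun s => mink (A s) (Z₂ s) with hb₂
  set b₃ : ℝ → ℝ := fun s => mink (A s) (Z₃ s) with hb₃
  -- conservation of mink(T, Z)
  have hψ : ∀ Z : ℝ → Fin 4 → ℝ, (∀ s ∈ I, HasDerivAt Z (v s (Z s)) s) →
      mink (T s₀) (Z s₀) = 0 → ∀ s ∈ I, mink (T s) (Z s) = 0 := by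
    intro Z hZ hinit s hs
    have hd : ∀ u ∈ I, HasDerivAt (fun t => mink (T t) (Z t)) 0 u := by
      intro u hu
      have hder := hasDerivAt_mink (hT' u hu) (hZ u hu)
      convert hder using 1
      simp only [hv, mink_smul_right]
      rw [hTT u hu]
      ring
    rw [const_of_hasDerivAt_zero hIopen hIconv hd hs hs₀, hinit]
  have hψ₁ := hψ Z₁ hZ₁ (by rw [hZ₁0]; exact eT1)
  have hψ₂ := hψ Z₂ hZ₂ (by rw [hZ₂0]; exact eT2)
  have hψ₃ := hψ Z₃ hZ₃ (by rw [hZ₃0]; exact eT3)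
  -- conservation of mink(Y, Z)
  have hχ : ∀ Y Z : ℝ → Fin 4 → ℝ, (∀ s ∈ I, HasDerivAt Y (v s (Y s)) s) →
      (∀ s ∈ I, HasDerivAt Z (v s (Z s)) s) →
      (∀ s ∈ I, mink (T s) (Y s) = 0) → (∀ s ∈ I, mink (T s) (Z s) = 0) →
      ∀ c : ℝ, mink (Y s₀) (Z s₀) = c → ∀ s ∈ I, mink (Y s) (Z s) = c := by
    intro Y Z hY hZ hTY hTZ c hinit s hs
    have hd : ∀ u ∈ I, HasDerivAt (fun t => mink (Y t) (Z t)) 0 u := by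
      intro u hu
      have hder := hasDerivAt_mink (hY u hu) (hZ u hu)
      convert hder using 1
      simp only [hv]
      rw [mink_smul_right, mink_symm (mink (A u) (Y u) • T u) (Z u), mink_smul_right,
        mink_symm (Z u) (T u), hTZ u hu, mink_symm (Y u) (T u), hTY u hu]
      ring
    rw [const_of_hasDerivAt_zero hIopen hIconv hd hs hs₀, hinit]
  have h11 := hχ Z₁ Z₁ hZ₁ hZ₁ hψ₁ hψ₁ 1 (by rw [hZ₁0]; exact e11)
  have h22 := hχ Z₂ Z₂ hZ₂ hZ₂ hψ₂ hψ₂ 1 (by rw [hZ₂0]; exact e22)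
  have h33 := hχ Z₃ Z₃ hZ₃ hZ₃ hψ₃ hψ₃ 1 (by rw [hZ₃0]; exact e33)
  have h12 := hχ Z₁ Z₂ hZ₁ hZ₂ hψ₁ hψ₂ 0 (by rw [hZ₁0, hZ₂0]; exact e12)
  have h13 := hχ Z₁ Z₃ hZ₁ hZ₃ hψ₁ hψ₃ 0 (by rw [hZ₁0, hZ₃0]; exact e13)
  have h23 := hχ Z₂ Z₃ hZ₂ hZ₃ hψ₂ hψ₃ 0 (by rw [hZ₂0, hZ₃0]; exact e23)
  -- smoothness of the Zᵢ
  have hZ₁sm : ContDiffOn ℝ (⊤:ℕ∞) Z₁ I :=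
    contDiffOn_of_frame_ode hIopen hAsm hTsm (fun s hs => by simpa [hv] using hZ₁ s hs)
  have hZ₂sm : ContDiffOn ℝ (⊤:ℕ∞) Z₂ I :=
    contDiffOn_of_frame_ode hIopen hAsm hTsm (fun s hs => by simpa [hv] using hZ₂ s hs)
  have hZ₃sm : ContDiffOn ℝ (⊤:ℕ∞) Z₃ I :=
    contDiffOn_of_frame_ode hIopen hAsm hTsm (fun s hs => by simpa [hv] using hZ₃ s hs)
  refine ⟨Z₁, Z₂, Z₃, b₁, b₂, b₃,
    ⟨hZ₁sm, hZ₂sm, hZ₃sm, fun s hs =>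
      ⟨h11 s hs, h22 s hs, h33 s hs, h12 s hs, h13 s hs, h23 s hs,
        hψ₁ s hs, hψ₂ s hs, hψ₃ s hs⟩⟩,
    ⟨contDiffOn_mink hAsm hZ₁sm, contDiffOn_mink hAsm hZ₂sm, contDiffOn_mink hAsm hZ₃sm⟩,
    fun s hs => ⟨?_, ?_, ?_, ?_⟩⟩
  · -- completeness
    have hcompl := mink_complete (T s) (Z₁ s) (Z₂ s) (Z₃ s) (A s)
      (hTT s hs) (h11 s hs) (h22 s hs) (h33 s hs) (h12 s hs) (h13 s hs) (h23 s hs)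
      (hψ₁ s hs) (hψ₂ s hs) (hψ₃ s hs) (hTA s hs)
    have hb₁' : mink (A s) (Z₁ s) = b₁ s := rfl
    calc deriv (deriv γ) s = A s := rfl
      _ = mink (A s) (Z₁ s) • Z₁ s + mink (A s) (Z₂ s) • Z₂ s + mink (A s) (Z₃ s) • Z₃ s := hcompl
      _ = b₁ s • Z₁ s + b₂ s • Z₂ s + b₃ s • Z₃ s := rfl
  · rw [(hZ₁ s hs).deriv]
  · rw [(hZ₂ s hs).deriv]
  · rw [(hZ₃ s hs).deriv]
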